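/- arXiv:1308.4893 — 2 statements merged into one kernel-verified Lean document; each statement's English description precedes it below -/
import Mathlib

section
/- Let G = (V,E) be a (possibly infinite) loopless graph and K : V × V → ℝ a symmetric function such that: (a) K(x,y) ≤ 0 whenever x ≠ y are nonadjacent; (b) for every finite subset S ⊆ V the matrix (K(x,y) − 1)_{x,y∈S} is positive semidefinite; (c) K(x,x) ≤ B for all x ∈ V. Then every finite independent set I of G satisfies |I| ≤ B. -/
/-- Generalized theta-prime bound (Theorem on kernels bounding the independence
number): if `K` is symmetric, nonpositive on distinct nonadjacent pairs, `K - J`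
is positive semidefinite on every finite subset, and `K(x,x) ≤ B`, then every
finite independent set has at most `B` elements. -/
theorem stmt2 {V : Type*} [Nonempty V] (G : SimpleGraph V) (K : V → V → ℝ) (B : ℝ)
    (hsymm : ∀ x y, K x y = K y x)
    (hnonadj : ∀ x y, x ≠ y → ¬G.Adj x y → K x y ≤ 0)
    (hpsd : ∀ (S : Finset V) (c : V → ℝ),
      0 ≤ ∑ x ∈ S, ∑ y ∈ S, c x * c y * (K x y - 1))
    (hdiag : ∀ x, K x x ≤ B)
    (I : Finset V) (hI : ∀ x ∈ I, ∀ y ∈ I, x ≠ y → ¬G.Adj x y) :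
    (I.card : ℝ) ≤ B := by
  classical
  rcases I.eq_empty_or_nonempty with h | ⟨x0, hx0⟩
  · subst h
    simp only [Finset.card_empty, Nat.cast_zero]
    obtain ⟨x⟩ := ‹Nonempty V›
    have h1 := hpsd {x} (fun _ => 1)
    simp at h1
    have := hdiag x
    linarith
  · set n : ℝ := (I.card : ℝ) with hn
    have hnpos : 0 < n := by
      simp only [hn, Nat.cast_pos, Finset.card_pos]
      exact ⟨x0, hx0⟩
    have h1 := hpsd I (fun _ => 1)
    simp only [one_mul] at h1
    have hsum : ∑ x ∈ I, ∑ y ∈ I, (K x y - 1) =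
        (∑ x ∈ I, ∑ y ∈ I, K x y) - n * n := by
      simp [Finset.sum_sub_distrib, hn]
    rw [hsum] at h1
    -- ∑∑ K ≤ ∑ diag ≤ n * B
    have h2 : ∑ x ∈ I, ∑ y ∈ I, K x y ≤ ∑ x ∈ I, K x x := by
      apply Finset.sum_le_sum
      intro x hx
      have : ∑ y ∈ I, K x y = K x x + ∑ y ∈ I.erase x, K x y := by
        rw [Finset.add_sum_erase _ _ hx]
      rw [this]
      have : ∑ y ∈ I.erase x, K x y ≤ 0 := by
        apply Finset.sum_nonpos
        intro y hy
        have hyx := Finset.ne_of_mem_erase hy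
        have hyI := Finset.mem_of_mem_erase hy
        exact hnonadj x y hyx.symm (fun h => hI x hx y hyI hyx.symm h)
      linarith
    have h3 : ∑ x ∈ I, K x x ≤ n * B := by
      calc ∑ x ∈ I, K x x ≤ ∑ _x ∈ I, B := Finset.sum_le_sum fun x _ => hdiag x
        _ = n * B := by rw [Finset.sum_const]; simp [hn]
    have hnn : n * n ≤ n * B := by linarith
    exact le_of_mul_le_mul_left hnn hnpos
end

section
/- The angle between two adjacent faces of a regular tetrahedron equals arccos(1/3), and arccos(1/3) < 2π/5; consequently five regular tetrahedra sharing a common edge cannot tile the full angle around that edge. -/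
open Real

/-- The dihedral angle of a regular tetrahedron (the angle between two adjacent
faces, measured at the midpoint `m` of the common edge as the angle between the
vectors from `m` to the two opposite vertices) equals `arccos(1/3)`, and
`arccos(1/3) < 2π/5`; consequently `5 · arccos(1/3) < 2π`, so five regular
tetrahedra sharing a common edge cannot tile the full angle around that edge. -/
theorem stmt8 (v : Fin 4 → EuclideanSpace ℝ (Fin 3)) (d : ℝ) (hd : 0 < d)
    (hreg : ∀ i j, i ≠ j → dist (v i) (v j) = d) :
    InnerProductGeometry.angle (v 2 - midpoint ℝ (v 0) (v 1))
        (v 3 - midpoint ℝ (v 0) (v 1)) = arccos (1 / 3) ∧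
    arccos (1 / 3) < 2 * π / 5 ∧
    5 * arccos (1 / 3) < 2 * π := by
  have key : ∀ i j, i ≠ j →
      ((inner ℝ (v i) (v i) : ℝ) - 2 * (inner ℝ (v i) (v j) : ℝ) + (inner ℝ (v j) (v j) : ℝ) = d ^ 2) := by
    intro i j hij
    have h1 := hreg i j hij
    rw [dist_eq_norm] at h1
    have h2 : (inner ℝ (v i - v j) (v i - v j) : ℝ) = d ^ 2 := by
      rw [real_inner_self_eq_norm_sq, h1]
    rw [inner_sub_left, inner_sub_right, inner_sub_right] at h2
    linear_combination h2 - real_inner_comm (v j) (v i)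
  have e01 := key 0 1 (by decide)
  have e02 := key 0 2 (by decide)
  have e03 := key 0 3 (by decide)
  have e12 := key 1 2 (by decide)
  have e13 := key 1 3 (by decide)
  have e23 := key 2 3 (by decide)
  have hm : midpoint ℝ (v 0) (v 1) = (1 / 2 : ℝ) • (v 0 + v 1) := by
    rw [midpoint_eq_smul_add]; norm_num
  set a := v 2 - midpoint ℝ (v 0) (v 1) with ha_def
  set b := v 3 - midpoint ℝ (v 0) (v 1) with hb_def
  have hinner : (inner ℝ a b : ℝ) = d ^ 2 / 4 := by
    rw [ha_def, hb_def, hm]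
    simp only [inner_sub_left, inner_sub_right, inner_smul_left, inner_smul_right,
      inner_add_left, inner_add_right, RCLike.conj_to_real]
    linear_combination (-1/4)*e01 + (1/4)*e02 + (1/4)*e03 + (1/4)*e12 + (1/4)*e13 - (1/2)*e23
      - (1/2)*real_inner_comm (v 2) (v 0) - (1/2)*real_inner_comm (v 2) (v 1)
      + (1/4)*real_inner_comm (v 1) (v 0)
      - real_inner_comm (v 0) (v 2) - real_inner_comm (v 1) (v 2)
      - (1/2)*real_inner_comm (v 1) (v 0)
  have hna : ‖a‖ ^ 2 = 3 * d ^ 2 / 4 := by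
    rw [← real_inner_self_eq_norm_sq, ha_def, hm]
    simp only [inner_sub_left, inner_sub_right, inner_smul_left, inner_smul_right,
      inner_add_left, inner_add_right, RCLike.conj_to_real]
    linear_combination (-1/4)*e01 + (1/2)*e02 + (1/2)*e12
      - real_inner_comm (v 2) (v 0) - real_inner_comm (v 2) (v 1)
      + (1/4)*real_inner_comm (v 1) (v 0)
      - (3/2)*real_inner_comm (v 0) (v 2) - (3/2)*real_inner_comm (v 1) (v 2)
      - (1/2)*real_inner_comm (v 1) (v 0)
  have hnb : ‖b‖ ^ 2 = 3 * d ^ 2 / 4 := by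
    rw [← real_inner_self_eq_norm_sq, hb_def, hm]
    simp only [inner_sub_left, inner_sub_right, inner_smul_left, inner_smul_right,
      inner_add_left, inner_add_right, RCLike.conj_to_real]
    linear_combination (-1/4)*e01 + (1/2)*e03 + (1/2)*e13
      - real_inner_comm (v 3) (v 0) - real_inner_comm (v 3) (v 1)
      + (1/4)*real_inner_comm (v 1) (v 0)
      - (3/2)*real_inner_comm (v 0) (v 3) - (3/2)*real_inner_comm (v 1) (v 3)
      - (1/2)*real_inner_comm (v 1) (v 0)
  have hna' : ‖a‖ = Real.sqrt (3 * d ^ 2 / 4) := by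
    rw [← hna]; exact (Real.sqrt_sq (norm_nonneg a)).symm
  have hnb' : ‖b‖ = Real.sqrt (3 * d ^ 2 / 4) := by
    rw [← hnb]; exact (Real.sqrt_sq (norm_nonneg b)).symm
  have hab : ‖a‖ * ‖b‖ = 3 * d ^ 2 / 4 := by
    rw [hna', hnb', Real.mul_self_sqrt (by positivity)]
  have hd2 : d ^ 2 ≠ 0 := by positivity
  have h1 : InnerProductGeometry.angle a b = arccos (1 / 3) := by
    rw [InnerProductGeometry.angle, hinner, hab]
    congr 1
    field_simp
  -- second part
  have hcospi5 : cos (π / 5) = (1 + √5) / 4 := Real.cos_pi_div_five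
  have hsq5 : (√5) ^ 2 = 5 := Real.sq_sqrt (by norm_num)
  have hcos : cos (2 * π / 5) = (√5 - 1) / 4 := by
    have : (2 : ℝ) * π / 5 = 2 * (π / 5) := by ring
    rw [this, Real.cos_two_mul, hcospi5]
    linear_combination (1/8) * hsq5
  have h5 : √5 < 7 / 3 := by
    nlinarith [hsq5, Real.sqrt_nonneg 5]
  have hlt : cos (2 * π / 5) < 1 / 3 := by rw [hcos]; linarith
  have hmem1 : cos (2 * π / 5) ∈ Set.Icc (-1 : ℝ) 1 :=
    ⟨Real.neg_one_le_cos _, Real.cos_le_one _⟩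
  have hmem2 : (1 / 3 : ℝ) ∈ Set.Icc (-1 : ℝ) 1 := by constructor <;> norm_num
  have h2 : arccos (1 / 3) < 2 * π / 5 := by
    have := Real.strictAntiOn_arccos hmem1 hmem2 hlt
    rwa [Real.arccos_cos (by positivity) (by nlinarith [pi_pos])] at this
  exact ⟨h1, h2, by linarith⟩
end
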